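/- For a function ψ: Fin K → ℝ³, the image of the map (p,q,v) ↦ ψ(p) − ψ(q) + ψ(v) over (Fin K)³ has cardinality at most (K³ − K² + 2K)/2. -/

import Mathlib

open Finset in
/-- Counting third-order distortion directions: the image of
`(p,q,v) ↦ ψ(p) − ψ(q) + ψ(v)` over `(Fin K)³` has at most `(K³ − K² + 2K)/2` elements. -/
theorem third_order_image_card_le (K : ℕ) (ψ : Fin K → (Fin 3 → ℝ)) :
    (Set.range fun t : Fin K × Fin K × Fin K => ψ t.1 - ψ t.2.1 + ψ t.2.2).ncard ≤
      (K ^ 3 - K ^ 2 + 2 * K) / 2 := by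
  classical
  set f : Fin K × Fin K × Fin K → (Fin 3 → ℝ) :=
    fun t => ψ t.1 - ψ t.2.1 + ψ t.2.2 with hf
  set B : Finset (Fin K × Fin K × Fin K) :=
    univ.filter (fun t => (t.1 < t.2.2 ∧ t.2.1 ≠ t.1 ∧ t.2.1 ≠ t.2.2) ∨ t.1 = t.2.2) with hB
  -- Step 1: the range is covered by the image of `B` (symmetry `(p,q,v) ↦ (v,q,p)`
  -- plus degenerate cases `q = p`, `q = v`).
  have hcover : Set.range f ⊆ ↑(B.image f) := by
    rintro x ⟨⟨p, q, v⟩, rfl⟩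
    simp only [coe_image, Set.mem_image, mem_coe, hB, mem_filter, mem_univ, true_and]
    by_cases hqp : q = p
    · refine ⟨(v, v, v), Or.inr rfl, ?_⟩
      subst hqp; simp only [hf]; abel
    · by_cases hqv : q = v
      · refine ⟨(p, p, p), Or.inr rfl, ?_⟩
        subst hqv; simp only [hf]; abel
      · rcases lt_trichotomy p v with h | h | h
        · exact ⟨(p, q, v), Or.inl ⟨h, hqp, hqv⟩, rfl⟩
        · exact ⟨(p, q, v), Or.inr h, rfl⟩
        · refine ⟨(v, q, p), Or.inl ⟨h, hqv, hqp⟩, ?_⟩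
          simp only [hf]; abel
  have h1 : (Set.range f).ncard ≤ B.card := by
    have h := Set.ncard_le_ncard hcover (B.image f).finite_toSet
    rw [Set.ncard_coe_finset] at h
    exact h.trans card_image_le
  refine h1.trans ?_
  -- Step 2: count `B`.
  set c : ℕ := ((univ ×ˢ univ : Finset (Fin K × Fin K)).filter
      (fun t => t.1 < t.2)).card with hc
  have hBc : B.card = (K - 2) * c + K * K := by
    have step1 : B.card =
        ∑ p : Fin K, ∑ v : Fin K, ∑ q : Fin K,
          if ((p < v ∧ q ≠ p ∧ q ≠ v) ∨ p = v) then 1 else 0 := by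
      rw [hB, Finset.card_filter, Fintype.sum_prod_type]
      refine Finset.sum_congr rfl fun p _ => ?_
      rw [Fintype.sum_prod_type]
      exact Finset.sum_comm
    have inner : ∀ p v : Fin K,
        (∑ q : Fin K, if ((p < v ∧ q ≠ p ∧ q ≠ v) ∨ p = v) then 1 else 0) =
        if p < v then K - 2 else if p = v then K else 0 := by
      intro p v
      rcases lt_trichotomy p v with h | h | h
      · rw [if_pos h]
        have hne : p ≠ v := ne_of_lt h
        have hiff : ∀ q : Fin K, ((p < v ∧ q ≠ p ∧ q ≠ v) ∨ p = v) ↔ (q ≠ p ∧ q ≠ v) := by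
          intro q
          constructor
          · rintro (⟨_, h2⟩ | h2)
            · exact h2
            · exact absurd h2 hne
          · exact fun h2 => Or.inl ⟨h, h2⟩
        simp only [hiff]
        rw [← Finset.card_filter]
        have hset : (univ.filter fun q : Fin K => q ≠ p ∧ q ≠ v) = univ \ {p, v} := by
          ext q; simp [not_or]
        rw [hset, Finset.card_sdiff_of_subset (Finset.subset_univ _), Finset.card_univ, Fintype.card_fin,
          Finset.card_pair hne]
      · have h1 : ¬ p < v := by simp [h]
        rw [if_neg h1, if_pos h]
        simp [h, Finset.card_univ]
      · have h1 : ¬ p < v := asymm h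
        have h2 : p ≠ v := (ne_of_lt h).symm
        rw [if_neg h1, if_neg h2]
        simp [h1, h2]
    rw [step1]
    simp only [inner]
    rw [← Finset.sum_product']
    have hsplit : ∀ t : Fin K × Fin K,
        (if t.1 < t.2 then K - 2 else if t.1 = t.2 then K else 0) =
        (if t.1 < t.2 then K - 2 else 0) + (if t.1 = t.2 then K else 0) := by
      intro t
      rcases lt_trichotomy t.1 t.2 with h | h | h
      · simp [h, ne_of_lt h]
      · simp [h]
      · simp [asymm h, (ne_of_lt h).symm]
    rw [Finset.sum_congr rfl fun t _ => hsplit t, Finset.sum_add_distrib,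
      ← Finset.sum_filter, ← Finset.sum_filter, Finset.sum_const, Finset.sum_const,
      smul_eq_mul, smul_eq_mul, mul_comm]
    congr 1
    have hdg : ((univ ×ˢ univ : Finset (Fin K × Fin K)).filter (fun t => t.1 = t.2)) =
        (univ : Finset (Fin K)).diag := by
        ext t; simp [Finset.mem_diag]
    rw [hdg, Finset.diag_card, Finset.card_univ, Fintype.card_fin]
  -- `2c = K² − K` by the swap symmetry on strict pairs.
  have hc2 : c + c = K * K - K := by
    have hswap : c = ((univ ×ˢ univ : Finset (Fin K × Fin K)).filter
        (fun t => t.2 < t.1)).card := by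
      rw [hc]
      refine Finset.card_bij' (fun t _ => (t.2, t.1)) (fun t _ => (t.2, t.1)) ?_ ?_ ?_ ?_ <;>
        simp +contextual [Finset.mem_filter]
    have hdisj : Disjoint ((univ ×ˢ univ : Finset (Fin K × Fin K)).filter (fun t => t.1 < t.2))
        ((univ ×ˢ univ : Finset (Fin K × Fin K)).filter (fun t => t.2 < t.1)) := by
      rw [Finset.disjoint_left]
      rintro ⟨a, b⟩ ha hb
      simp only [Finset.mem_filter] at ha hb
      exact absurd hb.2 (not_lt.mpr ha.2.le)
    have hun : ((univ ×ˢ univ : Finset (Fin K × Fin K)).filter (fun t => t.1 < t.2)) ∪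
        ((univ ×ˢ univ : Finset (Fin K × Fin K)).filter (fun t => t.2 < t.1)) =
        (univ : Finset (Fin K)).offDiag := by
      rw [← Finset.filter_or]
      ext t; simp [Finset.mem_offDiag, lt_or_lt_iff_ne]
    have hcu := Finset.card_union_of_disjoint hdisj
    rw [hun, Finset.offDiag_card, Finset.card_univ, Fintype.card_fin] at hcu
    omega
  -- Step 3: arithmetic.
  rw [Nat.le_div_iff_mul_le two_pos, hBc]
  have hmul : ((K - 2) * c + K * K) * 2 = (K - 2) * (c + c) + 2 * (K * K) := by ring
  rw [hmul, hc2]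
  match K with
  | 0 => simp
  | 1 => simp
  | (n + 2) =>
    have e1 : (n + 2) * (n + 2) - (n + 2) = n ^ 2 + 3 * n + 2 := by
      have : (n + 2) * (n + 2) = n ^ 2 + 4 * n + 4 := by ring
      omega
    have e2 : (n + 2) ^ 3 - (n + 2) ^ 2 + 2 * (n + 2) = n ^ 3 + 5 * n ^ 2 + 10 * n + 8 := by
      have h3 : (n + 2) ^ 3 = n ^ 3 + 6 * n ^ 2 + 12 * n + 8 := by ring
      have h2 : (n + 2) ^ 2 = n ^ 2 + 4 * n + 4 := by ring
      omega
    rw [e1, e2, Nat.add_sub_cancel]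
    exact Nat.le_of_eq (by ring)
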